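/- arXiv:2001.03434 — 7 statements merged into one kernel-verified Lean document; each statement's English description precedes it below -/
import Mathlib

section
/- For every linear isomorphism T of the Euclidean plane ℝ² there exists an orthonormal pair of vectors u, v in ℝ² such that the images T u and T v are orthogonal. (This is Tissot's theorem on the existence of 'principal tangents': every differentiable, nondegenerate map sends some pair of orthogonal directions to a pair of orthogonal directions.) -/
open RealInnerProductSpace

/-- Tissot's theorem on the existence of principal tangents: every linear
isomorphism of the Euclidean plane sends some orthonormal pair of vectors to a
pair of orthogonal vectors. -/
theorem tissot_principal_tangents
    (T : EuclideanSpace ℝ (Fin 2) ≃L[ℝ] EuclideanSpace ℝ (Fin 2)) :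
    ∃ u v : EuclideanSpace ℝ (Fin 2), ‖u‖ = 1 ∧ ‖v‖ = 1 ∧ ⟪u, v⟫ = 0 ∧
      ⟪T u, T v⟫ = 0 := by
  set u : ℝ → EuclideanSpace ℝ (Fin 2) := fun θ => !₂[Real.cos θ, Real.sin θ] with hu
  set v : ℝ → EuclideanSpace ℝ (Fin 2) := fun θ => !₂[-Real.sin θ, Real.cos θ] with hv
  set f : ℝ → ℝ := fun θ => ⟪T (u θ), T (v θ)⟫ with hf
  have hcu : Continuous u := by
    apply (PiLp.continuous_toLp 2 _).comp
    apply continuous_pi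
    intro i
    fin_cases i <;> simp [hu] <;> fun_prop
  have hcv : Continuous v := by
    apply (PiLp.continuous_toLp 2 _).comp
    apply continuous_pi
    intro i
    fin_cases i <;> simp [hv] <;> fun_prop
  have hcf : Continuous f := by
    apply Continuous.inner <;> exact T.continuous.comp (by assumption)
  have hvu : ∀ θ, v θ = u (θ + Real.pi / 2) := by
    intro θ
    ext i
    fin_cases i <;>
      simp [hu, hv, Real.cos_add, Real.sin_add]
  have huv : ∀ θ, u θ = -v (θ + Real.pi / 2) := by
    intro θ
    ext i
    fin_cases i <;>
      simp [hu, hv, Real.cos_add, Real.sin_add]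
  have key : f (Real.pi / 2) = -f 0 := by
    simp only [hf]
    rw [show u (Real.pi / 2) = v 0 by rw [hvu 0]; norm_num,
      show v (Real.pi / 2) = -u 0 by rw [huv 0]; norm_num]
    rw [map_neg]
    rw [real_inner_comm]
    simp
  have hex : ∃ θ ∈ Set.Icc 0 (Real.pi / 2), f θ = 0 := by
    have hle : (0:ℝ) ≤ Real.pi / 2 := by positivity
    rcases le_or_gt (f 0) 0 with h0 | h0
    · have : (0:ℝ) ∈ Set.Icc (f 0) (f (Real.pi / 2)) := by
        constructor
        · exact h0
        · rw [key]; linarith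
      obtain ⟨θ, hθ, hθ0⟩ := intermediate_value_Icc hle hcf.continuousOn this
      exact ⟨θ, hθ, hθ0⟩
    · have : (0:ℝ) ∈ Set.Icc (f (Real.pi / 2)) (f 0) := by
        constructor
        · rw [key]; linarith
        · exact h0.le
      obtain ⟨θ, hθ, hθ0⟩ := intermediate_value_Icc' hle hcf.continuousOn this
      exact ⟨θ, hθ, hθ0⟩
  obtain ⟨θ, _, hθ0⟩ := hex
  refine ⟨u θ, v θ, ?_, ?_, ?_, hθ0⟩
  · rw [show (1:ℝ) = Real.sqrt 1 by simp, EuclideanSpace.norm_eq]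
    congr 1
    simp [hu, Fin.sum_univ_two, sq_abs, Real.sin_sq_add_cos_sq]
  · rw [show (1:ℝ) = Real.sqrt 1 by simp, EuclideanSpace.norm_eq]
    congr 1
    simp [hv, Fin.sum_univ_two, sq_abs, Real.sin_sq_add_cos_sq]
  · simp [hu, hv, EuclideanSpace.inner_eq_star_dotProduct]
    ring
end

section
/- Let T be a linear isomorphism of ℝ². Call T conformal if there is a constant c > 0 and a linear isometry O of ℝ² with T = c • O. If T is NOT conformal, then the orthonormal pair u, v with T u ⟂ T v is unique up to replacing u by −u, v by −v, and interchanging u and v: if u', v' is another orthonormal pair with T u' ⟂ T v', then (u' = u or u' = −u or u' = v or u' = −v). (This is Tissot's uniqueness statement: unless the mapping is angle-preserving at the point, the pair of orthogonal directions sent to orthogonal directions is unique.) -/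
open RealInnerProductSpace

set_option maxHeartbeats 1000000

/-- Tissot's uniqueness statement: if a linear isomorphism `T` of the Euclidean
plane is not conformal (i.e. not of the form `c • O` with `c > 0` and `O` a
linear isometry), then the orthonormal pair sent by `T` to an orthogonal pair
is unique up to sign changes and interchanging the two vectors. -/
theorem tissot_principal_tangents_unique
    (T : EuclideanSpace ℝ (Fin 2) ≃L[ℝ] EuclideanSpace ℝ (Fin 2))
    (hnc : ¬ ∃ c : ℝ, 0 < c ∧
      ∃ O : EuclideanSpace ℝ (Fin 2) →ₗᵢ[ℝ] EuclideanSpace ℝ (Fin 2),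
        ∀ x, T x = c • O x)
    (u v : EuclideanSpace ℝ (Fin 2))
    (hu : ‖u‖ = 1) (hv : ‖v‖ = 1) (huv : ⟪u, v⟫ = 0) (hT : ⟪T u, T v⟫ = 0)
    (u' v' : EuclideanSpace ℝ (Fin 2))
    (hu' : ‖u'‖ = 1) (hv' : ‖v'‖ = 1) (huv' : ⟪u', v'⟫ = 0)
    (hT' : ⟪T u', T v'⟫ = 0) :
    u' = u ∨ u' = -u ∨ u' = v ∨ u' = -v := by
  have hvu : ⟪v, u⟫ = 0 := by rw [real_inner_comm]; exact huv
  have hTvu : ⟪T v, T u⟫ = 0 := by rw [real_inner_comm]; exact hT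
  have huu : ⟪u, u⟫ = 1 := by rw [real_inner_self_eq_norm_mul_norm, hu]; ring
  have hvv : ⟪v, v⟫ = 1 := by rw [real_inner_self_eq_norm_mul_norm, hv]; ring
  -- `![u, v]` is an orthonormal basis
  have hon : Orthonormal ℝ ![u, v] := by
    rw [orthonormal_iff_ite]
    intro i j
    fin_cases i <;> fin_cases j <;> simp [huu, hvv, huv, hvu, hu, hv]
  have hcard : Fintype.card (Fin 2) = Module.finrank ℝ (EuclideanSpace ℝ (Fin 2)) := by
    simp [finrank_euclideanSpace]
  set bb := basisOfOrthonormalOfCardEqFinrank hon hcard with hbb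
  have hspan : ∀ w : EuclideanSpace ℝ (Fin 2), ∃ p q : ℝ, w = p • u + q • v := by
    intro w
    refine ⟨bb.repr w 0, bb.repr w 1, ?_⟩
    have h := bb.sum_repr w
    rw [Fin.sum_univ_two] at h
    have h0 : bb 0 = u := by
      rw [hbb, coe_basisOfOrthonormalOfCardEqFinrank]; simp
    have h1 : bb 1 = v := by
      rw [hbb, coe_basisOfOrthonormalOfCardEqFinrank]; simp
    rw [h0, h1] at h
    exact h.symm
  -- inner product expansions
  have hip : ∀ p q r s : ℝ, ⟪p • u + q • v, r • u + s • v⟫ = p * r + q * s := by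
    intro p q r s
    simp only [inner_add_left, inner_add_right, real_inner_smul_left, real_inner_smul_right,
      huu, hvv, huv, hvu]
    ring
  set A := ⟪T u, T u⟫ with hA
  set B := ⟪T v, T v⟫ with hB
  have hipT : ∀ p q r s : ℝ,
      ⟪T (p • u + q • v), T (r • u + s • v)⟫ = p * r * A + q * s * B := by
    intro p q r s
    simp only [map_add, map_smul, inner_add_left, inner_add_right, real_inner_smul_left,
      real_inner_smul_right, hT, hTvu, ← hA, ← hB]
    ring
  obtain ⟨a, b, hab⟩ := hspan u'
  obtain ⟨c, d, hcd⟩ := hspan v'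
  have e1 : a * a + b * b = 1 := by
    have : ⟪u', u'⟫ = 1 := by rw [real_inner_self_eq_norm_mul_norm, hu']; ring
    rw [hab, hip] at this; exact this
  have e2 : c * c + d * d = 1 := by
    have : ⟪v', v'⟫ = 1 := by rw [real_inner_self_eq_norm_mul_norm, hv']; ring
    rw [hcd, hip] at this; exact this
  have e3 : a * c + b * d = 0 := by
    have := huv'; rw [hab, hcd, hip] at this; exact this
  have e4 : a * c * A + b * d * B = 0 := by
    have := hT'; rw [hab, hcd, hipT] at this; exact this
  by_cases hAB : A = B
  · -- conformal: contradiction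
    exfalso
    have hune : u ≠ 0 := fun h => by simp [h] at hu
    have hk : (0 : ℝ) < ‖T u‖ := by
      rw [norm_pos_iff]
      have : T u ≠ T 0 := T.injective.ne hune
      simpa using this
    set k := ‖T u‖ with hkdef
    have hAk : A = k * k := real_inner_self_eq_norm_mul_norm _
    have hnorm : ∀ w : EuclideanSpace ℝ (Fin 2), ‖T w‖ = k * ‖w‖ := by
      intro w
      obtain ⟨p, q, hw⟩ := hspan w
      have h1 : ⟪T w, T w⟫ = p * p * A + q * q * B := by rw [hw, hipT]
      have h2 : ⟪w, w⟫ = p * p + q * q := by rw [hw, hip]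
      have h3 : ‖T w‖ * ‖T w‖ = (k * ‖w‖) * (k * ‖w‖) := by
        rw [← real_inner_self_eq_norm_mul_norm, h1]
        have : k * ‖w‖ * (k * ‖w‖) = (k * k) * (‖w‖ * ‖w‖) := by ring
        rw [this, ← hAk, ← real_inner_self_eq_norm_mul_norm, h2, ← hAB]
        ring
      rcases mul_self_eq_mul_self_iff.mp h3 with h | h
      · exact h
      · have h1' : (0:ℝ) ≤ ‖T w‖ := norm_nonneg _
        have h2' : (0:ℝ) ≤ k * ‖w‖ := by positivity
        linarith
    refine hnc ⟨k, hk, ⟨⟨k⁻¹ • (T : EuclideanSpace ℝ (Fin 2) →ₗ[ℝ] EuclideanSpace ℝ (Fin 2)),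
      ?_⟩, ?_⟩⟩
    · intro w
      simp only [LinearMap.smul_apply]
      rw [norm_smul, show ((T : EuclideanSpace ℝ (Fin 2) →ₗ[ℝ] EuclideanSpace ℝ (Fin 2)) w)
        = T w from rfl, hnorm]
      rw [Real.norm_eq_abs, abs_of_pos (inv_pos.mpr hk), ← mul_assoc,
        inv_mul_cancel₀ hk.ne', one_mul]
    · intro x
      simp only [LinearIsometry.coe_mk, LinearMap.smul_apply, smul_smul,
        mul_inv_cancel₀ hk.ne', one_smul]
      rfl
  · -- non-conformal: a*c = 0 and b*d = 0
    have hac : a * c = 0 := by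
      have : a * c * (A - B) = 0 := by linear_combination e4 - B * e3
      rcases mul_eq_zero.mp this with h | h
      · exact h
      · exact absurd (by linarith) hAB
    have hbd : b * d = 0 := by linarith [e3, hac]
    rcases mul_eq_zero.mp hac with ha | hc
    · -- a = 0 : u' = ±v
      have hb2 : b * b = 1 := by rw [ha] at e1; linarith
      rcases mul_self_eq_one_iff.mp hb2 with hb | hb
      · right; right; left; rw [hab, ha, hb]; simp
      · right; right; right; rw [hab, ha, hb]; simp
    · -- c = 0 : d = ±1, so b = 0, u' = ±u
      have hd2 : d * d = 1 := by rw [hc] at e2; linarith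
      have hdne : d ≠ 0 := fun h => by rw [h] at hd2; norm_num at hd2
      have hb0 : b = 0 := by
        rcases mul_eq_zero.mp hbd with h | h
        · exact h
        · exact absurd h hdne
      have ha2 : a * a = 1 := by rw [hb0] at e1; linarith
      rcases mul_self_eq_one_iff.mp ha2 with ha | ha
      · left; rw [hab, hb0, ha]; simp
      · right; left; rw [hab, hb0, ha]; simp
end

section
/- Let T be a linear isomorphism of ℝ² and let u, v be an orthonormal pair with T u ⟂ T v, and set a = max(‖T u‖, ‖T v‖), b = min(‖T u‖, ‖T v‖). Then for every unit vector x in ℝ² one has b ≤ ‖T x‖ ≤ a. (Tissot: the principal tangents correspond to the directions in which the ratio of lengths of corresponding infinitesimal line elements attains its greatest and smallest values.) -/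
open RealInnerProductSpace

lemma norm_sq_smul_add_smul {E : Type*} [NormedAddCommGroup E] [InnerProductSpace ℝ E]
    (p q : E) (h : ⟪p, q⟫ = 0) (c d : ℝ) :
    ‖c • p + d • q‖ ^ 2 = c ^ 2 * ‖p‖ ^ 2 + d ^ 2 * ‖q‖ ^ 2 := by
  rw [norm_add_sq_real, real_inner_smul_left, real_inner_smul_right, h, norm_smul, norm_smul]
  simp only [mul_pow, sq_abs, Real.norm_eq_abs, mul_zero]
  ring

lemma le_of_sq_le_sq' (a b : ℝ) (ha : 0 ≤ a) (hb : 0 ≤ b) (h : a ^ 2 ≤ b ^ 2) : a ≤ b := by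
  nlinarith

/-- Tissot: the principal tangents give the extremal length distortions.  If
`u, v` is an orthonormal pair sent by `T` to an orthogonal pair, then for every
unit vector `x` the length `‖T x‖` lies between `min (‖T u‖) (‖T v‖)` and
`max (‖T u‖) (‖T v‖)`. -/
theorem tissot_extremal_distortion
    (T : EuclideanSpace ℝ (Fin 2) ≃L[ℝ] EuclideanSpace ℝ (Fin 2))
    (u v : EuclideanSpace ℝ (Fin 2))
    (hu : ‖u‖ = 1) (hv : ‖v‖ = 1) (huv : ⟪u, v⟫ = 0) (hT : ⟪T u, T v⟫ = 0) :
    ∀ x : EuclideanSpace ℝ (Fin 2), ‖x‖ = 1 →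
      min ‖T u‖ ‖T v‖ ≤ ‖T x‖ ∧ ‖T x‖ ≤ max ‖T u‖ ‖T v‖ := by
  have hu' : ⟪u, u⟫ = 1 := by
    rw [real_inner_self_eq_norm_sq, hu]; norm_num
  have hv' : ⟪v, v⟫ = 1 := by
    rw [real_inner_self_eq_norm_sq, hv]; norm_num
  have hvu : ⟪v, u⟫ = 0 := by rw [real_inner_comm]; exact huv
  have hon : Orthonormal ℝ ![u, v] := by
    rw [orthonormal_iff_ite]
    intro i j
    fin_cases i <;> fin_cases j <;>
      simp only [Matrix.cons_val_zero, Matrix.cons_val_one, Matrix.head_cons,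
        Fin.mk_zero, Fin.mk_one] <;>
      first
        | simpa using hu'
        | simpa using hv'
        | simpa using huv
        | simpa using hvu
  have hcard : Fintype.card (Fin 2) = Module.finrank ℝ (EuclideanSpace ℝ (Fin 2)) := by simp
  set B := basisOfOrthonormalOfCardEqFinrank hon hcard with hB
  have hBc : ∀ i, B i = ![u, v] i := fun i => by
    rw [hB, coe_basisOfOrthonormalOfCardEqFinrank]
  intro x hx
  set c := B.repr x 0
  set d := B.repr x 1
  have hxr : x = c • u + d • v := by
    have := B.sum_repr x
    rw [Fin.sum_univ_two, hBc 0, hBc 1] at this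
    simpa using this.symm
  have hcd : c ^ 2 + d ^ 2 = 1 := by
    have : ‖x‖ ^ 2 = c ^ 2 * ‖u‖ ^ 2 + d ^ 2 * ‖v‖ ^ 2 := by
      rw [hxr]; exact norm_sq_smul_add_smul u v huv c d
    rw [hx, hu, hv] at this; linarith
  have hTx : ‖T x‖ ^ 2 = c ^ 2 * ‖T u‖ ^ 2 + d ^ 2 * ‖T v‖ ^ 2 := by
    have : T x = c • T u + d • T v := by rw [hxr]; simp
    rw [this]; exact norm_sq_smul_add_smul _ _ hT c d
  have h1 : (0:ℝ) ≤ c ^ 2 := sq_nonneg c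
  have h2 : (0:ℝ) ≤ d ^ 2 := sq_nonneg d
  have ha := norm_nonneg (T u)
  have hb := norm_nonneg (T v)
  have hc := norm_nonneg (T x)
  constructor
  · rcases le_total ‖T u‖ ‖T v‖ with h | h
    · rw [min_eq_left h]
      refine le_of_sq_le_sq' _ _ ha hc ?_
      nlinarith [mul_nonneg h2 (sub_nonneg.2 (pow_le_pow_left₀ ha h 2))]
    · rw [min_eq_right h]
      refine le_of_sq_le_sq' _ _ hb hc ?_
      nlinarith [mul_nonneg h1 (sub_nonneg.2 (pow_le_pow_left₀ hb h 2))]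
  · rcases le_total ‖T u‖ ‖T v‖ with h | h
    · rw [max_eq_right h]
      refine le_of_sq_le_sq' _ _ hc hb ?_
      nlinarith [mul_nonneg h1 (sub_nonneg.2 (pow_le_pow_left₀ ha h 2))]
    · rw [max_eq_left h]
      refine le_of_sq_le_sq' _ _ hc ha ?_
      nlinarith [mul_nonneg h2 (sub_nonneg.2 (pow_le_pow_left₀ hb h 2))]
end

section
/- Let T be a linear isomorphism of ℝ². The following are equivalent: (1) T is angle-preserving, i.e. for all nonzero x, y in ℝ², ⟪T x, T y⟫ / (‖T x‖ · ‖T y‖) = ⟪x, y⟫ / (‖x‖ · ‖y‖); (2) T = c • O for some real c > 0 and some linear isometry O of ℝ²; (3) ‖T u‖ = ‖T v‖ for every orthonormal pair u, v with T u ⟂ T v. (Conformality is equivalent to the Tissot indicatrix being a circle, i.e. to the equality of the two semi-axes.) -/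
open RealInnerProductSpace

local notation "ℝ²" => EuclideanSpace ℝ (Fin 2)



lemma exists_orthonormal_pair (T : ℝ² ≃L[ℝ] ℝ²) :
    ∃ u v : ℝ², ‖u‖ = 1 ∧ ‖v‖ = 1 ∧ ⟪u, v⟫ = 0 ∧ ⟪T u, T v⟫ = 0 := by
  set e1 : ℝ² := EuclideanSpace.single 0 1 with he1
  set e2 : ℝ² := EuclideanSpace.single 1 1 with he2
  have h11 : ⟪e1, e1⟫ = 1 := by simp [he1, EuclideanSpace.inner_single_left]
  have h22 : ⟪e2, e2⟫ = 1 := by simp [he2, EuclideanSpace.inner_single_left]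
  have h12 : ⟪e1, e2⟫ = 0 := by simp [he1, he2, EuclideanSpace.inner_single_left]
  have h21 : ⟪e2, e1⟫ = 0 := by simp [he1, he2, EuclideanSpace.inner_single_left]
  set u : ℝ → ℝ² := fun θ => Real.cos θ • e1 + Real.sin θ • e2 with hud
  set v : ℝ → ℝ² := fun θ => (-Real.sin θ) • e1 + Real.cos θ • e2 with hvd
  set g : ℝ → ℝ := fun θ => ⟪T (u θ), T (v θ)⟫ with hgd
  have hgc : Continuous g := by
    apply Continuous.inner <;> fun_prop
  have hg0 : g 0 = ⟪T e1, T e2⟫ := by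
    have hu0 : u 0 = e1 := by simp [hud]
    have hv0 : v 0 = e2 := by simp [hvd]
    show ⟪T (u 0), T (v 0)⟫ = _
    rw [hu0, hv0]
  have hgpi : g (Real.pi / 2) = -⟪T e1, T e2⟫ := by
    have hu2 : u (Real.pi / 2) = e2 := by simp [hud]
    have hv2 : v (Real.pi / 2) = -e1 := by simp [hvd]
    show ⟪T (u (Real.pi / 2)), T (v (Real.pi / 2))⟫ = _
    rw [hu2, hv2, map_neg, inner_neg_right, real_inner_comm]
  have hmem : (0 : ℝ) ∈ Set.uIcc (g 0) (g (Real.pi / 2)) := by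
    rw [hg0, hgpi, Set.mem_uIcc]
    rcases le_or_gt 0 (⟪T e1, T e2⟫ : ℝ) with h | h
    · right; constructor <;> linarith
    · left; constructor <;> linarith
  obtain ⟨θ, _, hθ⟩ := intermediate_value_uIcc hgc.continuousOn hmem
  refine ⟨u θ, v θ, ?_, ?_, ?_, hθ⟩
  · have h : ‖u θ‖ ^ 2 = 1 := by
      rw [← real_inner_self_eq_norm_sq]
      show ⟪Real.cos θ • e1 + Real.sin θ • e2, Real.cos θ • e1 + Real.sin θ • e2⟫ = 1
      simp only [inner_add_add_self, real_inner_smul_left, real_inner_smul_right,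
        h11, h22, h12, h21, mul_one, mul_zero, add_zero, zero_add]
      linear_combination Real.sin_sq_add_cos_sq θ
    nlinarith [norm_nonneg (u θ)]
  · have h : ‖v θ‖ ^ 2 = 1 := by
      rw [← real_inner_self_eq_norm_sq]
      show ⟪(-Real.sin θ) • e1 + Real.cos θ • e2, (-Real.sin θ) • e1 + Real.cos θ • e2⟫ = 1
      simp only [inner_add_add_self, real_inner_smul_left, real_inner_smul_right,
        h11, h22, h12, h21, mul_one, mul_zero, add_zero, zero_add]
      linear_combination Real.sin_sq_add_cos_sq θ
    nlinarith [norm_nonneg (v θ)]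
  · show ⟪Real.cos θ • e1 + Real.sin θ • e2, (-Real.sin θ) • e1 + Real.cos θ • e2⟫ = 0
    simp only [inner_add_left, inner_add_right, real_inner_smul_left, real_inner_smul_right,
      h11, h22, h12, h21, mul_one, mul_zero, add_zero, zero_add]
    ring


lemma pair_span (u v : ℝ²) (hu : ‖u‖ = 1) (hv : ‖v‖ = 1) (huv : ⟪u, v⟫ = 0)
    (x : ℝ²) : ∃ a b : ℝ, x = a • u + b • v := by
  have huu : ⟪u, u⟫ = 1 := by rw [real_inner_self_eq_norm_mul_norm, hu]; ring
  have hvv : ⟪v, v⟫ = 1 := by rw [real_inner_self_eq_norm_mul_norm, hv]; ring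
  have hvu : ⟪v, u⟫ = 0 := by rw [real_inner_comm]; exact huv
  have hon : Orthonormal ℝ ![u, v] := by
    rw [orthonormal_iff_ite]
    intro i j
    fin_cases i <;> fin_cases j <;>
      simp only [Matrix.cons_val_zero, Matrix.cons_val_one, Matrix.head_cons] <;>
      simp [huu, hvv, huv, hvu, hu, hv]
  have hcard : Fintype.card (Fin 2) = Module.finrank ℝ ℝ² := by simp
  let B := basisOfLinearIndependentOfCardEqFinrank hon.linearIndependent hcard
  have hB : ⇑B = ![u, v] := coe_basisOfLinearIndependentOfCardEqFinrank _ _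
  have h0 : B 0 = u := by rw [hB]; rfl
  have h1 : B 1 = v := by rw [hB]; rfl
  refine ⟨B.repr x 0, B.repr x 1, ?_⟩
  have := B.sum_repr x
  rw [Fin.sum_univ_two, h0, h1] at this
  exact this.symm


section Main

variable (T : ℝ² ≃L[ℝ] ℝ²)

lemma hBA (hB : ∃ c : ℝ, 0 < c ∧ ∃ O : ℝ² →ₗᵢ[ℝ] ℝ², ∀ x, T x = c • O x) :
    ∀ x y : ℝ², x ≠ 0 → y ≠ 0 →
      ⟪T x, T y⟫ / (‖T x‖ * ‖T y‖) = ⟪x, y⟫ / (‖x‖ * ‖y‖) := by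
  obtain ⟨c, hc, O, hO⟩ := hB
  intro x y hx hy
  have hinner : ⟪T x, T y⟫ = c ^ 2 * ⟪x, y⟫ := by
    rw [hO, hO, real_inner_smul_left, real_inner_smul_right, O.inner_map_map]
    ring
  have hnx : ‖T x‖ = c * ‖x‖ := by
    rw [hO, norm_smul, O.norm_map, Real.norm_eq_abs, abs_of_pos hc]
  have hny : ‖T y‖ = c * ‖y‖ := by
    rw [hO, norm_smul, O.norm_map, Real.norm_eq_abs, abs_of_pos hc]
  rw [hinner, hnx, hny]
  have h1 : ‖x‖ ≠ 0 := norm_ne_zero_iff.mpr hx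
  have h2 : ‖y‖ ≠ 0 := norm_ne_zero_iff.mpr hy
  field_simp

lemma hAC (hA : ∀ x y : ℝ², x ≠ 0 → y ≠ 0 →
      ⟪T x, T y⟫ / (‖T x‖ * ‖T y‖) = ⟪x, y⟫ / (‖x‖ * ‖y‖)) :
    ∀ u v : ℝ², ‖u‖ = 1 → ‖v‖ = 1 → ⟪u, v⟫ = 0 → ⟪T u, T v⟫ = 0 →
      ‖T u‖ = ‖T v‖ := by
  intro u v hu hv huv hTuv
  have hu0 : u ≠ 0 := fun h => by simp [h] at hu
  have huvnorm : ‖u + v‖ = Real.sqrt 2 := by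
    have : ‖u + v‖ ^ 2 = 2 := by
      rw [norm_add_sq_real, hu, hv, huv]; ring
    rw [← this]
    rw [Real.sqrt_sq (norm_nonneg _)]
  have huv0 : u + v ≠ 0 := by
    intro h
    rw [h] at huvnorm
    simp at huvnorm
    nlinarith [Real.sq_sqrt (by norm_num : (2:ℝ) ≥ 0), Real.sqrt_nonneg 2]
  have key := hA (u + v) u huv0 hu0
  have hnum : ⟪T (u + v), T u⟫ = ‖T u‖ ^ 2 := by
    rw [map_add, inner_add_left, real_inner_self_eq_norm_sq, real_inner_comm, hTuv, add_zero]
  have hden : ‖T (u + v)‖ ^ 2 = ‖T u‖ ^ 2 + ‖T v‖ ^ 2 := by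
    rw [map_add, norm_add_sq_real, hTuv]; ring
  have hrhs : ⟪u + v, u⟫ = 1 := by
    rw [inner_add_left, real_inner_self_eq_norm_sq, real_inner_comm, huv, hu]; norm_num
  rw [hnum, hrhs, huvnorm, hu] at key
  have hTu0 : T u ≠ 0 := fun h => hu0 (T.injective (by rw [h, map_zero]))
  have hTuv0 : T (u + v) ≠ 0 := fun h => huv0 (T.injective (by rw [h, map_zero]))
  have hp : (0:ℝ) < ‖T u‖ := norm_pos_iff.mpr hTu0
  have hr : (0:ℝ) < ‖T (u + v)‖ := norm_pos_iff.mpr hTuv0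
  have hs2 : (0:ℝ) < Real.sqrt 2 := Real.sqrt_pos.mpr (by norm_num)
  have hq : (0:ℝ) ≤ ‖T v‖ := norm_nonneg _
  -- key : ‖T u‖^2 / (‖T(u+v)‖ * ‖T u‖) = 1 / (√2 * 1)
  have hTadd : T (u + v) = T u + T v := map_add T u v
  have key2 : ‖T u‖ * Real.sqrt 2 = ‖T (u + v)‖ := by
    rw [hTadd]
    rw [hTadd] at hr
    field_simp [ne_of_gt hr] at key
    rw [← hTadd]; exact key
  have : 2 * ‖T u‖ ^ 2 = ‖T (u + v)‖ ^ 2 := by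
    rw [← key2]
    have := Real.sq_sqrt (by norm_num : (2:ℝ) ≥ 0)
    nlinarith [this]
  nlinarith [hden, this, hp, hq]

lemma hCB (hC : ∀ u v : ℝ², ‖u‖ = 1 → ‖v‖ = 1 → ⟪u, v⟫ = 0 → ⟪T u, T v⟫ = 0 →
      ‖T u‖ = ‖T v‖) :
    ∃ c : ℝ, 0 < c ∧ ∃ O : ℝ² →ₗᵢ[ℝ] ℝ², ∀ x, T x = c • O x := by
  obtain ⟨u, v, hu, hv, huv, hTuv⟩ := exists_orthonormal_pair T
  have heq : ‖T u‖ = ‖T v‖ := hC u v hu hv huv hTuv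
  set c : ℝ := ‖T u‖ with hcd
  have hu0 : u ≠ 0 := fun h => by simp [h] at hu
  have hTu0 : T u ≠ 0 := fun h => hu0 (T.injective (by rw [h, map_zero]))
  have hc : 0 < c := norm_pos_iff.mpr hTu0
  have hnorm : ∀ x : ℝ², ‖T x‖ = c * ‖x‖ := by
    intro x
    obtain ⟨a, b, rfl⟩ := pair_span u v hu hv huv x
    have h1 : ‖T (a • u + b • v)‖ ^ 2 = c ^ 2 * (a ^ 2 + b ^ 2) := by
      rw [map_add, map_smul, map_smul, norm_add_sq_real, norm_smul, norm_smul,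
        real_inner_smul_left, real_inner_smul_right, hTuv]
      rw [Real.norm_eq_abs, Real.norm_eq_abs, ← heq]
      rw [mul_pow, mul_pow, sq_abs, sq_abs]
      ring
    have h2 : ‖a • u + b • v‖ ^ 2 = a ^ 2 + b ^ 2 := by
      rw [norm_add_sq_real, norm_smul, norm_smul, real_inner_smul_left,
        real_inner_smul_right, huv, hu, hv]
      rw [Real.norm_eq_abs, Real.norm_eq_abs]
      rw [mul_pow, mul_pow, sq_abs, sq_abs]
      ring
    have hn1 : (0:ℝ) ≤ ‖T (a • u + b • v)‖ := norm_nonneg _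
    have hn2 : (0:ℝ) ≤ c * ‖a • u + b • v‖ := by positivity
    nlinarith [h1, h2, hn1, hn2]
  refine ⟨c, hc, ⟨c⁻¹ • (T.toLinearEquiv.toLinearMap), ?_⟩, ?_⟩
  · intro x
    simp only [LinearMap.smul_apply, norm_smul, Real.norm_eq_abs,
      abs_of_pos (inv_pos.mpr hc)]
    show c⁻¹ * ‖T x‖ = ‖x‖
    rw [hnorm x]
    field_simp
  · intro x
    show T x = c • (c⁻¹ • T x)
    rw [smul_inv_smul₀ (ne_of_gt hc)]

end Main

/-- Characterizations of conformality for a linear isomorphism `T` of the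
Euclidean plane: (1) `T` preserves angles; (2) `T = c • O` with `c > 0` and `O`
a linear isometry; (3) the two semi-axes of the Tissot indicatrix are equal,
i.e. `‖T u‖ = ‖T v‖` for every orthonormal pair `u, v` with `T u ⟂ T v`. -/
theorem tissot_conformal_characterization
    (T : EuclideanSpace ℝ (Fin 2) ≃L[ℝ] EuclideanSpace ℝ (Fin 2)) :
    ((∀ x y : EuclideanSpace ℝ (Fin 2), x ≠ 0 → y ≠ 0 →
        ⟪T x, T y⟫ / (‖T x‖ * ‖T y‖) = ⟪x, y⟫ / (‖x‖ * ‖y‖)) ↔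
      (∃ c : ℝ, 0 < c ∧
        ∃ O : EuclideanSpace ℝ (Fin 2) →ₗᵢ[ℝ] EuclideanSpace ℝ (Fin 2),
          ∀ x, T x = c • O x)) ∧
    ((∀ x y : EuclideanSpace ℝ (Fin 2), x ≠ 0 → y ≠ 0 →
        ⟪T x, T y⟫ / (‖T x‖ * ‖T y‖) = ⟪x, y⟫ / (‖x‖ * ‖y‖)) ↔
      (∀ u v : EuclideanSpace ℝ (Fin 2),
        ‖u‖ = 1 → ‖v‖ = 1 → ⟪u, v⟫ = 0 → ⟪T u, T v⟫ = 0 →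
          ‖T u‖ = ‖T v‖)) := by
  exact ⟨⟨fun hA => hCB T (hAC T hA), hBA T⟩, ⟨hAC T, fun hC => hBA T (hCB T hC)⟩⟩
end

section
/- Let f : ℝ² → ℝ² be a map differentiable at a point p whose derivative (fderiv ℝ f p) is a linear isomorphism. Then there exists an orthonormal pair u, v in ℝ² such that ⟪(fderiv ℝ f p) u, (fderiv ℝ f p) v⟫ = 0. (Tissot's theorem at the level of differentiable mappings: at each point where the map is differentiable and nondegenerate, there is a pair of orthogonal directions sent to orthogonal directions.) -/
open RealInnerProductSpace

/-- Tissot's theorem at the level of differentiable mappings: if `f` is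
differentiable at `p` with bijective derivative, then there is an orthonormal
pair of directions sent by the derivative to orthogonal directions. -/
theorem tissot_principal_tangents_of_differentiable
    (f : EuclideanSpace ℝ (Fin 2) → EuclideanSpace ℝ (Fin 2))
    (p : EuclideanSpace ℝ (Fin 2))
    (hf : DifferentiableAt ℝ f p)
    (hbij : Function.Bijective (fderiv ℝ f p)) :
    ∃ u v : EuclideanSpace ℝ (Fin 2), ‖u‖ = 1 ∧ ‖v‖ = 1 ∧ ⟪u, v⟫ = 0 ∧
      ⟪fderiv ℝ f p u, fderiv ℝ f p v⟫ = 0 := by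
  set T := fderiv ℝ f p with hT
  set e1 : EuclideanSpace ℝ (Fin 2) := EuclideanSpace.single 0 1
  set e2 : EuclideanSpace ℝ (Fin 2) := EuclideanSpace.single 1 1
  have h11 : ⟪e1, e1⟫ = 1 := by simp [e1, EuclideanSpace.inner_single_left]
  have h22 : ⟪e2, e2⟫ = 1 := by simp [e2, EuclideanSpace.inner_single_left]
  have h12 : ⟪e1, e2⟫ = 0 := by
    simp [e1, e2, EuclideanSpace.inner_single_left, EuclideanSpace.single_apply]
  have h21 : ⟪e2, e1⟫ = 0 := by rw [real_inner_comm]; exact h12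
  set u : ℝ → EuclideanSpace ℝ (Fin 2) := fun θ => Real.cos θ • e1 + Real.sin θ • e2
  set v : ℝ → EuclideanSpace ℝ (Fin 2) := fun θ => -Real.sin θ • e1 + Real.cos θ • e2
  have hnormu : ∀ θ, ‖u θ‖ = 1 := by
    intro θ
    have : ⟪u θ, u θ⟫ = 1 := by
      simp only [u, inner_add_left, inner_add_right, real_inner_smul_left,
        real_inner_smul_right, h11, h22, h12, h21]
      ring_nf
      nlinarith [Real.sin_sq_add_cos_sq θ]
    have h2 := real_inner_self_eq_norm_mul_norm (u θ)
    nlinarith [norm_nonneg (u θ)]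
  have hnormv : ∀ θ, ‖v θ‖ = 1 := by
    intro θ
    have : ⟪v θ, v θ⟫ = 1 := by
      simp only [v, inner_add_left, inner_add_right, real_inner_smul_left,
        real_inner_smul_right, h11, h22, h12, h21]
      ring_nf
      nlinarith [Real.sin_sq_add_cos_sq θ]
    have h2 := real_inner_self_eq_norm_mul_norm (v θ)
    nlinarith [norm_nonneg (v θ)]
  have huv : ∀ θ, ⟪u θ, v θ⟫ = 0 := by
    intro θ
    simp only [u, v, inner_add_left, inner_add_right, real_inner_smul_left,
      real_inner_smul_right, h11, h22, h12, h21]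
    ring
  set g : ℝ → ℝ := fun θ => ⟪T (u θ), T (v θ)⟫
  have hgc : Continuous g := by
    apply Continuous.inner
    · exact T.continuous.comp (by continuity)
    · exact T.continuous.comp (by continuity)
  have hneg : g (Real.pi / 2) = - g 0 := by
    simp only [g, u, v, Real.cos_pi_div_two, Real.sin_pi_div_two, Real.cos_zero,
      Real.sin_zero]
    simp [inner_neg_left, inner_neg_right, real_inner_comm]
  have hmem : (0 : ℝ) ∈ Set.uIcc (g 0) (g (Real.pi / 2)) := by
    rw [hneg]
    rcases le_total (g 0) 0 with h | h
    · exact Set.mem_uIcc.2 (Or.inl ⟨h, by linarith⟩)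
    · exact Set.mem_uIcc.2 (Or.inr ⟨by linarith, h⟩)
  obtain ⟨θ, -, hθ⟩ := intermediate_value_uIcc (hgc.continuousOn
    (s := Set.uIcc 0 (Real.pi / 2))) hmem
  exact ⟨u θ, v θ, hnormu θ, hnormv θ, huv θ, hθ⟩
end

section
/- Let T be a linear isomorphism of ℝ², let u, v be an orthonormal pair with T u ⟂ T v, and set a = ‖T u‖, b = ‖T v‖ with a ≥ b. Then for every pair of unit vectors x, y in ℝ² with ⟪x, y⟫ = 0 (an orthogonal pair of directions), the cosine of the angle between the images satisfies |⟪T x, T y⟫| / (‖T x‖ · ‖T y‖) ≤ (a² − b²)/(a² + b²). (Tissot's bound on the maximal angular distortion of a right angle: it is attained when the directions bisect the principal tangents, and sin of the maximal deviation of a right angle equals (a² − b²)/(a² + b²).) -/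
open RealInnerProductSpace

lemma tissot_decomp (u v : EuclideanSpace ℝ (Fin 2))
    (hu : ‖u‖ = 1) (hv : ‖v‖ = 1) (huv : ⟪u, v⟫ = 0) (x : EuclideanSpace ℝ (Fin 2)) :
    ∃ c s : ℝ, x = c • u + s • v := by
  have huu : ⟪u, u⟫ = 1 := by rw [real_inner_self_eq_norm_sq, hu]; norm_num
  have hvv : ⟪v, v⟫ = 1 := by rw [real_inner_self_eq_norm_sq, hv]; norm_num
  have h1 : u 0 * u 0 + u 1 * u 1 = 1 := by
    have := huu; simp only [PiLp.inner_apply, Fin.sum_univ_two, RCLike.inner_apply, conj_trivial] at this; linarith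
  have h2 : v 0 * v 0 + v 1 * v 1 = 1 := by
    have := hvv; simp only [PiLp.inner_apply, Fin.sum_univ_two, RCLike.inner_apply, conj_trivial] at this; linarith
  have h3 : u 0 * v 0 + u 1 * v 1 = 0 := by
    have := huv; simp only [PiLp.inner_apply, Fin.sum_univ_two, RCLike.inner_apply, conj_trivial] at this; linarith
  have hon : Orthonormal ℝ ![u, v] := by
    rw [orthonormal_iff_ite]
    intro i j
    fin_cases i <;> fin_cases j <;>
      simp [PiLp.inner_apply, Fin.sum_univ_two, hu, hv] <;> nlinarith [h1, h2, h3]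
  have hli := hon.linearIndependent
  have htop := hli.span_eq_top_of_card_eq_finrank (by simp)
  have hx : x ∈ Submodule.span ℝ (Set.range ![u, v]) := htop ▸ Submodule.mem_top
  have hr : Set.range ![u, v] = {u, v} := by
    simp [Matrix.range_cons, Matrix.range_empty, Set.pair_comm]
  rw [hr, Submodule.mem_span_pair] at hx
  obtain ⟨c, s, h⟩ := hx
  exact ⟨c, s, h.symm⟩

set_option maxHeartbeats 1000000 in
/-- Tissot's bound on the maximal angular distortion of a right angle: for any
orthogonal pair of unit directions `x, y`, the cosine of the angle between the
images satisfies `|⟪T x, T y⟫| / (‖T x‖ ‖T y‖) ≤ (a² − b²)/(a² + b²)`,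
where `a ≥ b` are the semi-axes of the Tissot indicatrix. -/
theorem tissot_angular_distortion_bound
    (T : EuclideanSpace ℝ (Fin 2) ≃L[ℝ] EuclideanSpace ℝ (Fin 2))
    (u v : EuclideanSpace ℝ (Fin 2))
    (hu : ‖u‖ = 1) (hv : ‖v‖ = 1) (huv : ⟪u, v⟫ = 0) (hT : ⟪T u, T v⟫ = 0)
    (a b : ℝ) (ha : a = ‖T u‖) (hb : b = ‖T v‖) (hab : a ≥ b) :
    ∀ x y : EuclideanSpace ℝ (Fin 2), ‖x‖ = 1 → ‖y‖ = 1 → ⟪x, y⟫ = 0 →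
      |⟪T x, T y⟫| / (‖T x‖ * ‖T y‖) ≤ (a ^ 2 - b ^ 2) / (a ^ 2 + b ^ 2) := by
  intro x y hx hy hxy
  -- positivity of a and b
  have hu0 : u ≠ 0 := by intro h; rw [h] at hu; simp at hu
  have hv0 : v ≠ 0 := by intro h; rw [h] at hv; simp at hv
  have hTu0 : T u ≠ 0 := fun h => hu0 (T.map_eq_zero_iff.mp h)
  have hTv0 : T v ≠ 0 := fun h => hv0 (T.map_eq_zero_iff.mp h)
  have hapos : 0 < a := ha ▸ norm_pos_iff.mpr hTu0
  have hbpos : 0 < b := hb ▸ norm_pos_iff.mpr hTv0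
  -- inner products of u, v
  have huu : ⟪u, u⟫ = 1 := by rw [real_inner_self_eq_norm_sq, hu]; norm_num
  have hvv : ⟪v, v⟫ = 1 := by rw [real_inner_self_eq_norm_sq, hv]; norm_num
  have hvu : ⟪v, u⟫ = 0 := by rw [real_inner_comm]; exact huv
  have hTuu : ⟪T u, T u⟫ = a ^ 2 := by rw [real_inner_self_eq_norm_sq, ha]
  have hTvv : ⟪T v, T v⟫ = b ^ 2 := by rw [real_inner_self_eq_norm_sq, hb]
  have hTvu : ⟪T v, T u⟫ = 0 := by rw [real_inner_comm]; exact hT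
  -- decompose x and y
  obtain ⟨c, s, hxd⟩ := tissot_decomp u v hu hv huv x
  obtain ⟨d, t, hyd⟩ := tissot_decomp u v hu hv huv y
  -- constraints
  have hxx : ⟪x, x⟫ = 1 := by rw [real_inner_self_eq_norm_sq, hx]; norm_num
  have hyy : ⟪y, y⟫ = 1 := by rw [real_inner_self_eq_norm_sq, hy]; norm_num
  have hc1 : c ^ 2 + s ^ 2 = 1 := by
    rw [hxd] at hxx
    simp only [inner_add_left, inner_add_right, real_inner_smul_left, real_inner_smul_right,
      huu, hvv, huv, hvu] at hxx
    linear_combination hxx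
  have hc2 : d ^ 2 + t ^ 2 = 1 := by
    rw [hyd] at hyy
    simp only [inner_add_left, inner_add_right, real_inner_smul_left, real_inner_smul_right,
      huu, hvv, huv, hvu] at hyy
    linear_combination hyy
  have hc3 : c * d + s * t = 0 := by
    rw [hxd, hyd] at hxy
    simp only [inner_add_left, inner_add_right, real_inner_smul_left, real_inner_smul_right,
      huu, hvv, huv, hvu] at hxy
    linear_combination hxy
  -- image inner products
  have hTx : T x = c • T u + s • T v := by rw [hxd]; simp only [map_add, map_smul]
  have hTy : T y = d • T u + t • T v := by rw [hyd]; simp only [map_add, map_smul]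
  have hip : ⟪T x, T y⟫ = c * d * a ^ 2 + s * t * b ^ 2 := by
    rw [hTx, hTy]
    simp only [inner_add_left, inner_add_right, real_inner_smul_left, real_inner_smul_right,
      hTuu, hTvv, hT, hTvu]
    ring
  have hnx : ‖T x‖ ^ 2 = c ^ 2 * a ^ 2 + s ^ 2 * b ^ 2 := by
    rw [← real_inner_self_eq_norm_sq, hTx]
    simp only [inner_add_left, inner_add_right, real_inner_smul_left, real_inner_smul_right,
      hTuu, hTvv, hT, hTvu]
    ring
  have hny : ‖T y‖ ^ 2 = d ^ 2 * a ^ 2 + t ^ 2 * b ^ 2 := by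
    rw [← real_inner_self_eq_norm_sq, hTy]
    simp only [inner_add_left, inner_add_right, real_inner_smul_left, real_inner_smul_right,
      hTuu, hTvv, hT, hTvu]
    ring
  have hx0 : x ≠ 0 := by intro h; rw [h] at hx; simp at hx
  have hy0 : y ≠ 0 := by intro h; rw [h] at hy; simp at hy
  have hTxpos : 0 < ‖T x‖ := norm_pos_iff.mpr fun h => hx0 (T.map_eq_zero_iff.mp h)
  have hTypos : 0 < ‖T y‖ := norm_pos_iff.mpr fun h => hy0 (T.map_eq_zero_iff.mp h)
  -- reduce to a polynomial inequality
  rw [div_le_div_iff₀ (by positivity) (by positivity)]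
  -- key squared inequality
  have key : (⟪T x, T y⟫ * (a ^ 2 + b ^ 2)) ^ 2 ≤ ((a ^ 2 - b ^ 2) * (‖T x‖ * ‖T y‖)) ^ 2 := by
    have expand : ((a ^ 2 - b ^ 2) * (‖T x‖ * ‖T y‖)) ^ 2
        = (a ^ 2 - b ^ 2) ^ 2 * ((c ^ 2 * a ^ 2 + s ^ 2 * b ^ 2) *
          (d ^ 2 * a ^ 2 + t ^ 2 * b ^ 2)) := by
      rw [mul_pow, mul_pow, hnx, hny]
    rw [expand, hip]
    obtain ⟨e, he, hd, ht⟩ : ∃ e : ℝ, e ^ 2 = 1 ∧ d = -s * e ∧ t = c * e :=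
      ⟨c * t - s * d,
        by linear_combination (d ^ 2 + t ^ 2) * hc1 + hc2 - (c * d + s * t) * hc3,
        by linear_combination c * hc3 - d * hc1,
        by linear_combination s * hc3 - t * hc1⟩
    rw [hd, ht]
    have key2 : (a ^ 2 - b ^ 2) ^ 2 * ((c ^ 2 * a ^ 2 + s ^ 2 * b ^ 2) *
          ((-s * e) ^ 2 * a ^ 2 + (c * e) ^ 2 * b ^ 2))
        - ((c * (-s * e) * a ^ 2 + s * (c * e) * b ^ 2) * (a ^ 2 + b ^ 2)) ^ 2
        = (e * a * b * (c ^ 2 - s ^ 2) * (a ^ 2 - b ^ 2)) ^ 2 := by ring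
    linarith [key2, sq_nonneg (e * a * b * (c ^ 2 - s ^ 2) * (a ^ 2 - b ^ 2))]
  have hD : (0:ℝ) < a ^ 2 + b ^ 2 := add_pos (pow_pos hapos 2) (pow_pos hbpos 2)
  have habs : |⟪T x, T y⟫| * (a ^ 2 + b ^ 2) = |⟪T x, T y⟫ * (a ^ 2 + b ^ 2)| := by
    rw [abs_mul, abs_of_pos hD]
  rw [habs]
  calc |⟪T x, T y⟫ * (a ^ 2 + b ^ 2)|
      = Real.sqrt ((⟪T x, T y⟫ * (a ^ 2 + b ^ 2)) ^ 2) := (Real.sqrt_sq_eq_abs _).symm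
    _ ≤ Real.sqrt (((a ^ 2 - b ^ 2) * (‖T x‖ * ‖T y‖)) ^ 2) := Real.sqrt_le_sqrt key
    _ = (a ^ 2 - b ^ 2) * (‖T x‖ * ‖T y‖) := by
        rw [Real.sqrt_sq_eq_abs, abs_of_nonneg]
        apply mul_nonneg (by nlinarith) (by positivity)
end

section
/- Let T be a linear isomorphism of ℝ² with |det T| = 1 (area-preserving), let u, v be an orthonormal pair with T u ⟂ T v, and set a = max(‖T u‖, ‖T v‖), b = min(‖T u‖, ‖T v‖). Then b = 1/a and a ≥ 1; moreover a = 1 if and only if T is a linear isometry. (For an area-preserving map, the Tissot indicatrix is an ellipse of area π with reciprocal semi-axes, and it is a circle exactly when the map is an isometry: an area-preserving map is conformal only if it is an isometry.) -/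
open RealInnerProductSpace

private lemma norm_sq_combo {E : Type*} [NormedAddCommGroup E] [InnerProductSpace ℝ E]
    (w₁ w₂ : E) (h : ⟪w₁, w₂⟫ = 0) (c d : ℝ) :
    ‖c • w₁ + d • w₂‖ ^ 2 = c ^ 2 * ‖w₁‖ ^ 2 + d ^ 2 * ‖w₂‖ ^ 2 := by
  have h' : ⟪w₂, w₁⟫ = 0 := by rw [real_inner_comm]; exact h
  rw [← real_inner_self_eq_norm_sq, ← real_inner_self_eq_norm_sq,
    ← real_inner_self_eq_norm_sq]
  simp only [inner_add_left, inner_add_right, real_inner_smul_left, real_inner_smul_right,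
    h, h']
  ring

set_option maxHeartbeats 1000000 in
/-- For an area-preserving linear isomorphism `T` of the Euclidean plane
(`|det T| = 1`), the Tissot indicatrix is an ellipse with reciprocal semi-axes:
`b = 1/a` and `a ≥ 1`; moreover `a = 1` (the indicatrix is a circle) if and
only if `T` is a linear isometry, i.e. preserves the norm. -/
theorem tissot_area_preserving
    (T : EuclideanSpace ℝ (Fin 2) ≃L[ℝ] EuclideanSpace ℝ (Fin 2))
    (hdet : |LinearMap.det (T.toLinearEquiv :
        EuclideanSpace ℝ (Fin 2) →ₗ[ℝ] EuclideanSpace ℝ (Fin 2))| = 1)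
    (u v : EuclideanSpace ℝ (Fin 2))
    (hu : ‖u‖ = 1) (hv : ‖v‖ = 1) (huv : ⟪u, v⟫ = 0) (hT : ⟪T u, T v⟫ = 0)
    (a b : ℝ) (ha : a = max ‖T u‖ ‖T v‖) (hb : b = min ‖T u‖ ‖T v‖) :
    b = 1 / a ∧ 1 ≤ a ∧
      (a = 1 ↔ ∀ x : EuclideanSpace ℝ (Fin 2), ‖T x‖ = ‖x‖) := by
  have hvu : ⟪v, u⟫ = 0 := by rw [real_inner_comm]; exact huv
  have huu : ⟪u, u⟫ = 1 := by rw [real_inner_self_eq_norm_sq, hu]; norm_num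
  have hvv : ⟪v, v⟫ = 1 := by rw [real_inner_self_eq_norm_sq, hv]; norm_num
  have hf : Orthonormal ℝ ![u, v] := by
    rw [orthonormal_iff_ite]
    intro i j
    fin_cases i <;> fin_cases j <;>
      simp [huv, hvu, huu, hvv, hu, hv]
  have hcard : Fintype.card (Fin 2) = Module.finrank ℝ (EuclideanSpace ℝ (Fin 2)) := by
    simp
  set B := basisOfOrthonormalOfCardEqFinrank hf hcard with hBdef
  have hB : ⇑B = ![u, v] := coe_basisOfOrthonormalOfCardEqFinrank hf hcard
  have hB0 : B 0 = u := by rw [hB]; rfl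
  have hB1 : B 1 = v := by rw [hB]; rfl
  set S : EuclideanSpace ℝ (Fin 2) →ₗ[ℝ] EuclideanSpace ℝ (Fin 2) :=
    (T.toLinearEquiv : EuclideanSpace ℝ (Fin 2) →ₗ[ℝ] EuclideanSpace ℝ (Fin 2)) with hSdef
  have hSapp : ∀ x, S x = T x := fun x => rfl
  set A := LinearMap.toMatrix B B S with hAdef
  have hA : ∀ i j, A i j = B.repr (S (B j)) i := fun i j => LinearMap.toMatrix_apply B B S i j
  have hTrep : ∀ x : EuclideanSpace ℝ (Fin 2),
      T x = (B.repr x 0) • T u + (B.repr x 1) • T v := by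
    intro x
    conv_lhs => rw [← B.sum_repr x]
    rw [Fin.sum_univ_two, hB0, hB1]
    simp [smul_add]
  have hTu : T u = A 0 0 • u + A 1 0 • v := by
    rw [hA 0 0, hA 1 0, hB0, hSapp]
    conv_lhs => rw [← B.sum_repr (T u)]
    rw [Fin.sum_univ_two, hB0, hB1]
  have hTv : T v = A 0 1 • u + A 1 1 • v := by
    rw [hA 0 1, hA 1 1, hB1, hSapp]
    conv_lhs => rw [← B.sum_repr (T v)]
    rw [Fin.sum_univ_two, hB0, hB1]
  -- norms squared
  have hnu : ‖T u‖ ^ 2 = A 0 0 ^ 2 + A 1 0 ^ 2 := by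
    rw [hTu, norm_sq_combo u v huv, hu, hv]; ring
  have hnv : ‖T v‖ ^ 2 = A 0 1 ^ 2 + A 1 1 ^ 2 := by
    rw [hTv, norm_sq_combo u v huv, hu, hv]; ring
  have hcross : A 0 0 * A 0 1 + A 1 0 * A 1 1 = 0 := by
    have h := hT
    rw [hTu, hTv] at h
    simp only [inner_add_left, inner_add_right, real_inner_smul_left, real_inner_smul_right,
      huv, hvu, huu, hvv] at h
    linarith
  have hdetsq : (A 0 0 * A 1 1 - A 0 1 * A 1 0) ^ 2 = 1 := by
    have h1 : (LinearMap.toMatrix B B S).det = LinearMap.det S := LinearMap.det_toMatrix B S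
    rw [Matrix.det_fin_two] at h1
    have h2 : |A 0 0 * A 1 1 - A 0 1 * A 1 0| = 1 := by rw [h1]; exact hdet
    rw [← sq_abs, h2]; norm_num
  -- ‖T u‖ * ‖T v‖ = 1
  have hTu0 : 0 < ‖T u‖ := by
    refine norm_pos_iff.mpr fun h => ?_
    have hu0 : u = 0 := T.injective (by simpa using h)
    rw [hu0] at hu; simp at hu
  have hTv0 : 0 < ‖T v‖ := by
    refine norm_pos_iff.mpr fun h => ?_
    have hv0 : v = 0 := T.injective (by simpa using h)
    rw [hv0] at hv; simp at hv
  have hprod : ‖T u‖ * ‖T v‖ = 1 := by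
    have hsq : (‖T u‖ * ‖T v‖) ^ 2 = 1 := by
      have h3 : (‖T u‖ * ‖T v‖) ^ 2 = ‖T u‖ ^ 2 * ‖T v‖ ^ 2 := by ring
      rw [h3, hnu, hnv]
      nlinarith [hcross, hdetsq]
    nlinarith [hsq, mul_pos hTu0 hTv0]
  have hab : a * b = 1 := by rw [ha, hb, max_mul_min]; exact hprod
  have ha0 : 0 < a := by rw [ha]; exact lt_max_of_lt_left hTu0
  have hba : b ≤ a := by rw [ha, hb]; exact min_le_max
  refine ⟨?_, ?_, ?_⟩
  · field_simp
    linarith [hab]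
  · nlinarith [hab, hba, ha0]
  · constructor
    · intro ha1
      have hb1 : b = 1 := by
        rw [ha1] at hab; linarith
      have hu1 : ‖T u‖ = 1 := by
        rcases max_cases ‖T u‖ ‖T v‖ with ⟨h1, h2⟩ | ⟨h1, h2⟩
        · rw [ha, h1] at ha1; exact ha1
        · rcases min_cases ‖T u‖ ‖T v‖ with ⟨h3, h4⟩ | ⟨h3, h4⟩
          · rw [hb, h3] at hb1; exact hb1
          · rw [ha, h1] at ha1; rw [hb, h3] at hb1; linarith
      have hv1 : ‖T v‖ = 1 := by
        rcases max_cases ‖T u‖ ‖T v‖ with ⟨h1, h2⟩ | ⟨h1, h2⟩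
        · rcases min_cases ‖T u‖ ‖T v‖ with ⟨h3, h4⟩ | ⟨h3, h4⟩
          · rw [ha, h1] at ha1; rw [hb, h3] at hb1; linarith
          · rw [hb, h3] at hb1; exact hb1
        · rw [ha, h1] at ha1; exact ha1
      intro x
      have hx : x = (B.repr x 0) • u + (B.repr x 1) • v := by
        conv_lhs => rw [← B.sum_repr x]
        rw [Fin.sum_univ_two, hB0, hB1]
      have h1 : ‖T x‖ ^ 2 = (B.repr x 0) ^ 2 + (B.repr x 1) ^ 2 := by
        rw [hTrep x, norm_sq_combo _ _ hT, hu1, hv1]; ring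
      have h2 : ‖x‖ ^ 2 = (B.repr x 0) ^ 2 + (B.repr x 1) ^ 2 := by
        conv_lhs => rw [hx]
        rw [norm_sq_combo u v huv, hu, hv]; ring
      nlinarith [norm_nonneg (T x), norm_nonneg x, h1, h2]
    · intro hiso
      rw [ha, hiso u, hiso v, hu, hv]
      simp
end
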